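/- Fix a pattern q of length k and r ≥ 2. There is an injection from the set of permutations of length n with exactly r occurrences of q, at least two of which share an entry, into {1,...,n} × {1,...,n} × (union over 0 ≤ i ≤ r−2 of the sets of permutations of length n−1 with exactly i occurrences of q). -/

import Mathlib

/-- `f` is an occurrence of the pattern `q` in the permutation `p`:
a strictly increasing choice of positions whose entries are order-isomorphic to `q`. -/
def IsOcc {k n : ℕ} (q : Equiv.Perm (Fin k)) (p : Equiv.Perm (Fin n))
    (f : Fin k → Fin n) : Prop :=
  (∀ i j : Fin k, i < j → f i < f j) ∧ ∀ i j : Fin k, q i < q j ↔ p (f i) < p (f j)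

instance {k n : ℕ} (q : Equiv.Perm (Fin k)) (p : Equiv.Perm (Fin n)) :
    DecidablePred (IsOcc q p) := fun f => by unfold IsOcc; infer_instance

/-- The number of occurrences of the pattern `q` in `p`. -/
def numOcc {k n : ℕ} (q : Equiv.Perm (Fin k)) (p : Equiv.Perm (Fin n)) : ℕ :=
  Fintype.card {f : Fin k → Fin n // IsOcc q p f}

/-- The number of permutations of length `n` avoiding `q`, i.e. `|S_n(q)|`. -/
def avoidersCard (n : ℕ) {k : ℕ} (q : Equiv.Perm (Fin k)) : ℕ :=
  Fintype.card {p : Equiv.Perm (Fin n) // numOcc q p = 0}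

/-- The number of permutations of length `n` with exactly `r` occurrences of `q`,
i.e. `|S_{n,r}(q)|`. -/
def occCard (n r : ℕ) {k : ℕ} (q : Equiv.Perm (Fin k)) : ℕ :=
  Fintype.card {p : Equiv.Perm (Fin n) // numOcc q p = r}

noncomputable def pat231 : Equiv.Perm (Fin 3) := Equiv.ofBijective ![1, 2, 0] (by decide)
noncomputable def pat321 : Equiv.Perm (Fin 3) := Equiv.ofBijective ![2, 1, 0] (by decide)
noncomputable def pat3412 : Equiv.Perm (Fin 4) := Equiv.ofBijective ![2, 3, 0, 1] (by decide)
noncomputable def pat4321 : Equiv.Perm (Fin 4) := Equiv.ofBijective ![3, 2, 1, 0] (by decide)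
noncomputable def pat4213 : Equiv.Perm (Fin 4) := Equiv.ofBijective ![3, 1, 0, 2] (by decide)
noncomputable def pat2413 : Equiv.Perm (Fin 4) := Equiv.ofBijective ![1, 3, 0, 2] (by decide)
noncomputable def pat3142 : Equiv.Perm (Fin 4) := Equiv.ofBijective ![2, 0, 3, 1] (by decide)

/-- `p` contains two distinct occurrences of `q` sharing an entry (a common position). -/
def HasSharedOcc {k n : ℕ} (q : Equiv.Perm (Fin k)) (p : Equiv.Perm (Fin n)) : Prop :=
  ∃ f g : Fin k → Fin n, IsOcc q p f ∧ IsOcc q p g ∧ f ≠ g ∧ ∃ a b : Fin k, f a = g b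

section Aux

variable {m k : ℕ}

/-- Delete the entry at position `i` from `p`, monotonically reindexing. -/
noncomputable def delPerm (p : Equiv.Perm (Fin (m + 1))) (i : Fin (m + 1)) :
    Equiv.Perm (Fin m) :=
  Equiv.removeNone ((finSuccEquiv' i).symm.trans (p.trans (finSuccEquiv' (p i))))

lemma delPerm_spec (p : Equiv.Perm (Fin (m + 1))) (i : Fin (m + 1)) (j : Fin m) :
    (p i).succAbove (delPerm p i j) = p (i.succAbove j) := by
  set e := (finSuccEquiv' i).symm.trans (p.trans (finSuccEquiv' (p i))) with he
  have h1 : e (some j) = finSuccEquiv' (p i) (p (i.succAbove j)) := by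
    simp [he, Equiv.trans_apply, finSuccEquiv'_symm_some]
  have h2 : ∃ x', e (some j) = some x' := by
    rw [h1]
    have hne : p (i.succAbove j) ≠ p i := by
      intro h
      exact Fin.succAbove_ne i j (p.injective h)
    rcases Fin.exists_succAbove_eq hne with ⟨z, hz⟩
    exact ⟨z, by rw [← hz, finSuccEquiv'_succAbove]⟩
  have h3 := Equiv.removeNone_some e h2
  rw [h1] at h3
  have := congrArg (finSuccEquiv' (p i)).symm h3.symm
  simpa [finSuccEquiv'_symm_some, delPerm, he] using this.symm

lemma delPerm_reconstruct {p p' : Equiv.Perm (Fin (m + 1))} {i : Fin (m + 1)}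
    (hv : p i = p' i) (hd : delPerm p i = delPerm p' i) : p = p' := by
  ext x
  rcases eq_or_ne x i with rfl | hx
  · exact congrArg Fin.val hv
  · rcases Fin.exists_succAbove_eq hx with ⟨j, rfl⟩
    have := delPerm_spec p i j
    rw [hd, hv] at this
    rw [← this, delPerm_spec p' i j]

lemma isOcc_lift {q : Equiv.Perm (Fin k)} {p : Equiv.Perm (Fin (m + 1))} {i : Fin (m + 1)}
    {f : Fin k → Fin m} (hf : IsOcc q (delPerm p i) f) :
    IsOcc q p (i.succAbove ∘ f) := by
  obtain ⟨h1, h2⟩ := hf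
  constructor
  · intro a b hab
    exact Fin.succAbove_lt_succAbove_iff.mpr (h1 a b hab)
  · intro a b
    rw [h2 a b, Function.comp_apply, Function.comp_apply,
      ← delPerm_spec p i (f a), ← delPerm_spec p i (f b)]
    exact (Fin.succAbove_lt_succAbove_iff).symm

lemma numOcc_delPerm_le {q : Equiv.Perm (Fin k)} {p : Equiv.Perm (Fin (m + 1))} {r : ℕ}
    (hp : numOcc q p = r) {f g : Fin k → Fin (m + 1)} (hf : IsOcc q p f) (hg : IsOcc q p g)
    (hfg : f ≠ g) {x : Fin (m + 1)} {a b : Fin k} (hfa : f a = x) (hgb : g b = x) :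
    numOcc q (delPerm p x) ≤ r - 2 := by
  classical
  set S : Finset (Fin k → Fin (m + 1)) := Finset.univ.filter (IsOcc q p) with hS
  set T : Finset (Fin k → Fin (m + 1)) :=
    S.filter (fun h => ∀ c, h c ≠ x) with hT
  have hScard : S.card = r := by
    rw [← hp, numOcc, Fintype.card_subtype]
  have hfS : f ∈ S \ T := by
    simp only [hT, hS, Finset.mem_sdiff, Finset.mem_filter, Finset.mem_univ, true_and]
    exact ⟨hf, fun h => (h.2 a) hfa⟩
  have hgS : g ∈ S \ T := by
    simp only [hT, hS, Finset.mem_sdiff, Finset.mem_filter, Finset.mem_univ, true_and]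
    exact ⟨hg, fun h => (h.2 b) hgb⟩
  have h2le : 2 ≤ (S \ T).card := by
    have : ({f, g} : Finset (Fin k → Fin (m + 1))) ⊆ S \ T := by
      intro z hz
      rcases Finset.mem_insert.mp hz with rfl | hz
      · exact hfS
      · rw [Finset.mem_singleton.mp hz]; exact hgS
    calc 2 = ({f, g} : Finset (Fin k → Fin (m + 1))).card := by
              rw [Finset.card_insert_of_notMem (by simpa using hfg), Finset.card_singleton]
      _ ≤ _ := Finset.card_le_card this
  have hTsub : T ⊆ S := Finset.filter_subset _ _
  have hTcard : T.card ≤ r - 2 := by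
    have := Finset.card_sdiff_add_card_eq_card hTsub
    omega
  -- inject occurrences of delPerm p x into T
  have hinj : numOcc q (delPerm p x) ≤ T.card := by
    rw [numOcc, Fintype.card_subtype]
    apply Finset.card_le_card_of_injOn (fun h => x.succAbove ∘ h)
    · intro h hmem
      simp only [Finset.mem_coe, Finset.mem_filter, Finset.mem_univ, true_and] at hmem
      simp only [Finset.mem_coe, hT, hS, Finset.mem_filter, Finset.mem_univ, true_and]
      exact ⟨isOcc_lift hmem, fun c => Fin.succAbove_ne x (h c)⟩
    · intro h1 _ h2 _ heq
      funext c
      exact Fin.succAbove_right_injective (congrFun heq c)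
  exact hinj.trans hTcard

end Aux

/-- There is an injection from the set of permutations of length `n` with exactly `r`
occurrences of `q`, at least two of which share an entry, into
`[n] × [n] × (⋃_{0 ≤ i ≤ r-2} S_{n-1,i}(q))`. -/
theorem exists_injection_shared {k : ℕ} (q : Equiv.Perm (Fin k)) (n r : ℕ) (hr : 2 ≤ r) :
    ∃ φ : {p : Equiv.Perm (Fin n) // numOcc q p = r ∧ HasSharedOcc q p} →
        Fin n × Fin n × {p : Equiv.Perm (Fin (n - 1)) // numOcc q p ≤ r - 2},
      Function.Injective φ := by
  classical
  rcases n with _ | m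
  · -- empty domain
    have : IsEmpty {p : Equiv.Perm (Fin 0) // numOcc q p = r ∧ HasSharedOcc q p} := by
      constructor
      rintro ⟨p, -, f, g, hf, hg, hfg, -⟩
      apply hfg
      funext c
      exact (f c).elim0
    exact ⟨fun p => (this.false p).elim, fun p => (this.false p).elim⟩
  · -- main case
    have key : ∀ p : {p : Equiv.Perm (Fin (m + 1)) //
        numOcc q p = r ∧ HasSharedOcc q p},
        ∃ x : Fin (m + 1), ∃ f g : Fin k → Fin (m + 1), IsOcc q p.1 f ∧ IsOcc q p.1 g ∧
          f ≠ g ∧ (∃ a, f a = x) ∧ (∃ b, g b = x) := by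
      rintro ⟨p, -, f, g, hf, hg, hfg, a, b, hab⟩
      exact ⟨f a, f, g, hf, hg, hfg, ⟨a, rfl⟩, ⟨b, hab.symm⟩⟩
    refine ⟨fun p =>
      ((key p).choose, p.1 (key p).choose,
        ⟨delPerm p.1 (key p).choose, ?_⟩), ?_⟩
    · obtain ⟨f, g, hf, hg, hfg, ⟨a, ha⟩, ⟨b, hb⟩⟩ := (key p).choose_spec
      exact numOcc_delPerm_le p.2.1 hf hg hfg ha hb
    · rintro ⟨p, hp⟩ ⟨p', hp'⟩ heq
      simp only [Prod.mk.injEq, Subtype.mk.injEq] at heq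
      obtain ⟨h1, h2, h3⟩ := heq
      have : p = p' := by
        apply delPerm_reconstruct (i := (key ⟨p, hp⟩).choose)
        · rw [h2]; rw [h1]
        · rw [h3]; rw [h1]
      simpa using this
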